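/- Let z ∈ ℂⁿ have all entries of unit modulus, W ∈ ℂ^{n×n} be Hermitian, σ ≥ 0, and C = zz* + σW. Suppose x ∈ ℂⁿ satisfies |xₖ| = 1 for all k, x is a global optimum of maximizing x*Cx over unit-modulus vectors, and choose its global phase so that z*x = |z*x|. Then ‖x - z‖₂ ≤ 4σ‖W‖₂/√n. -/

import Mathlib

noncomputable section

namespace PhaseSync

open Complex

variable {n : ℕ}

/-- Euclidean (ℓ²) norm on `Fin n → ℂ`. -/
def l2norm (v : Fin n → ℂ) : ℝ :=
  Real.sqrt (∑ k, ‖v k‖ ^ 2)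

/-- Entrywise sup (ℓ∞) norm on `Fin n → ℂ`. -/
def linfnorm (v : Fin n → ℂ) : ℝ :=
  ⨆ k, ‖v k‖

/-- Hermitian inner product `x*y = ∑ₖ conj(xₖ) yₖ`. -/
def herm (x y : Fin n → ℂ) : ℂ :=
  ∑ k, (starRingEnd ℂ) (x k) * y k

/-- Distance up to a global phase: `d₂(x,y) = inf_θ ‖x e^{iθ} - y‖₂`. -/
def d2 (x y : Fin n → ℂ) : ℝ :=
  ⨅ θ : ℝ, l2norm (fun k => Complex.exp (θ * Complex.I) * x k - y k)

/-- Sup-norm distance up to a global phase. -/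
def dinf (x y : Fin n → ℂ) : ℝ :=
  ⨅ θ : ℝ, linfnorm (fun k => Complex.exp (θ * Complex.I) * x k - y k)

/-- ℓ² operator (spectral) norm of a matrix. -/
def opNorm (A : Matrix (Fin n) (Fin n) ℂ) : ℝ :=
  ⨆ u : {u : Fin n → ℂ // l2norm u = 1}, l2norm (A.mulVec u)

/-- Entrywise projection to the unit circle (on nonzero entries). -/
def proj (v : Fin n → ℂ) : Fin n → ℂ :=
  fun k => v k / (‖v k‖ : ℂ)

/-- The rank-one matrix `z z*`. -/
def outer (z : Fin n → ℂ) : Matrix (Fin n) (Fin n) ℂ :=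
  Matrix.of fun i j => z i * (starRingEnd ℂ) (z j)

/-- The operator `ℒ v = (z*v/n) z + (σ/n) W v`. -/
def Lop (z : Fin n → ℂ) (σ : ℝ) (W : Matrix (Fin n) (Fin n) ℂ) (v : Fin n → ℂ) : Fin n → ℂ :=
  (herm z v / (n : ℂ)) • z + (σ / (n : ℝ)) • W.mulVec v

/-! ### Auxiliary lemmas -/

/-- Bridge to `EuclideanSpace`. -/
lemma l2norm_eq_norm (v : Fin n → ℂ) :
    l2norm v = ‖(WithLp.equiv 2 (Fin n → ℂ)).symm v‖ := by
  rw [EuclideanSpace.norm_eq]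
  simp [l2norm, WithLp.equiv_symm_apply]

lemma herm_eq_inner (x y : Fin n → ℂ) :
    herm x y = @inner ℂ _ _ ((WithLp.equiv 2 (Fin n → ℂ)).symm x)
      ((WithLp.equiv 2 (Fin n → ℂ)).symm y) := by
  simp [herm, PiLp.inner_apply, RCLike.inner_apply]
  exact Finset.sum_congr rfl fun _ _ => mul_comm _ _

lemma euclid_mulVec (W : Matrix (Fin n) (Fin n) ℂ) (v : Fin n → ℂ) :
    (WithLp.equiv 2 (Fin n → ℂ)).symm (W.mulVec v) =
      Matrix.toEuclideanCLM (𝕜 := ℂ) W ((WithLp.equiv 2 (Fin n → ℂ)).symm v) := by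
  exact (Matrix.toEuclideanCLM_toLp W v).symm

lemma opNorm_nonneg (W : Matrix (Fin n) (Fin n) ℂ) : 0 ≤ opNorm W :=
  Real.iSup_nonneg fun _ => by unfold l2norm; exact Real.sqrt_nonneg _

lemma l2norm_smul_real (r : ℝ) (v : Fin n → ℂ) :
    l2norm (r • v) = |r| * l2norm v := by
  rw [l2norm_eq_norm, l2norm_eq_norm, WithLp.equiv_symm_apply, WithLp.toLp_smul, norm_smul, Real.norm_eq_abs]

lemma l2norm_mulVec_le (W : Matrix (Fin n) (Fin n) ℂ) (v : Fin n → ℂ) :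
    l2norm (W.mulVec v) ≤ opNorm W * l2norm v := by
  set T := Matrix.toEuclideanCLM (𝕜 := ℂ) W with hT
  have hb : ∀ u : {u : Fin n → ℂ // l2norm u = 1}, l2norm (W.mulVec u) ≤ ‖T‖ := by
    intro u
    rw [l2norm_eq_norm, euclid_mulVec, ← hT]
    calc ‖T ((WithLp.equiv 2 (Fin n → ℂ)).symm u.1)‖
        ≤ ‖T‖ * ‖(WithLp.equiv 2 (Fin n → ℂ)).symm u.1‖ := T.le_opNorm _
      _ = ‖T‖ := by rw [← l2norm_eq_norm, u.2, mul_one]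
  have hbdd : BddAbove (Set.range fun u : {u : Fin n → ℂ // l2norm u = 1} =>
      l2norm (W.mulVec u)) := by
    refine ⟨‖T‖, ?_⟩
    rintro _ ⟨u, rfl⟩
    exact hb u
  have key : ∀ u : Fin n → ℂ, l2norm u = 1 → l2norm (W.mulVec u) ≤ opNorm W := by
    intro u hu
    exact le_ciSup hbdd ⟨u, hu⟩
  by_cases h0 : l2norm v = 0
  · have hv0 : v = 0 := by
      have h1 : ‖(WithLp.equiv 2 (Fin n → ℂ)).symm v‖ = 0 := by rw [← l2norm_eq_norm]; exact h0
      have h2 := norm_eq_zero.mp h1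
      have := congrArg (WithLp.equiv 2 (Fin n → ℂ)) h2
      simpa using this
    subst hv0
    simp only [Matrix.mulVec_zero, h0, mul_zero]
    simp [l2norm]
  · have hpos : 0 < l2norm v := lt_of_le_of_ne (by unfold l2norm; exact Real.sqrt_nonneg _) (Ne.symm h0)
    set r := l2norm v with hr
    have hu : l2norm (r⁻¹ • v) = 1 := by
      rw [l2norm_smul_real, abs_of_pos (inv_pos.mpr hpos), ← hr, inv_mul_cancel₀ (ne_of_gt hpos)]
    have hv : W.mulVec v = r • W.mulVec (r⁻¹ • v) := by
      rw [Matrix.mulVec_smul, smul_inv_smul₀ (ne_of_gt hpos)]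
    calc l2norm (W.mulVec v) = |r| * l2norm (W.mulVec (r⁻¹ • v)) := by
          rw [hv, l2norm_smul_real]
      _ = r * l2norm (W.mulVec (r⁻¹ • v)) := by rw [abs_of_pos hpos]
      _ ≤ r * opNorm W := by
          exact mul_le_mul_of_nonneg_left (key _ hu) (le_of_lt hpos)
      _ = opNorm W * r := mul_comm _ _

lemma herm_self_eq (v : Fin n → ℂ) (hv : ∀ k, ‖v k‖ = 1) :
    herm v v = (n : ℂ) := by
  unfold herm
  have : ∀ k : Fin n, (starRingEnd ℂ) (v k) * v k = 1 := by
    intro k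
    rw [mul_comm, Complex.mul_conj]
    norm_cast
    rw [Complex.normSq_eq_norm_sq, hv k, one_pow]
  simp [this]

lemma l2norm_unit (v : Fin n → ℂ) (hv : ∀ k, ‖v k‖ = 1) :
    l2norm v = Real.sqrt n := by
  unfold l2norm
  congr 1
  simp [hv]

/-- deterministic ℓ₂ bound for a global optimum of the phase
synchronization problem, with global phase chosen so `z*x = |z*x|`. -/
theorem stmt6 (n : ℕ) (hn : 0 < n) (z : Fin n → ℂ) (hz : ∀ k, ‖z k‖ = 1)
    (W : Matrix (Fin n) (Fin n) ℂ) (hW : W.IsHermitian) (σ : ℝ) (hσ : 0 ≤ σ)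
    (x : Fin n → ℂ) (hx : ∀ k, ‖x k‖ = 1)
    (hopt : ∀ v : Fin n → ℂ, (∀ k, ‖v k‖ = 1) →
      (dotProduct (star v) ((outer z + σ • W).mulVec v)).re ≤
        (dotProduct (star x) ((outer z + σ • W).mulVec x)).re)
    (hphase : herm z x = (‖herm z x‖ : ℂ)) :
    l2norm (x - z) ≤ 4 * σ * opNorm W / Real.sqrt n := by
  -- notation
  set a : ℝ := ‖herm z x‖ with ha
  set D : ℝ := l2norm (x - z) with hD
  set ρ : ℝ := opNorm W with hρ
  have hρ0 : 0 ≤ ρ := opNorm_nonneg W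
  have hsn : 0 < Real.sqrt n := Real.sqrt_pos.mpr (by exact_mod_cast hn)
  -- the quadratic form splits
  have hq : ∀ v : Fin n → ℂ,
      (dotProduct (star v) ((outer z + σ • W).mulVec v)).re =
        ‖herm z v‖ ^ 2 + σ * (dotProduct (star v) (W.mulVec v)).re := by
    intro v
    rw [Matrix.add_mulVec, dotProduct_add]
    have h1 : dotProduct (star v) ((outer z).mulVec v) =
        (Complex.normSq (herm z v) : ℂ) := by
      have hmv : (outer z).mulVec v = fun i => z i * herm z v := by
        funext i
        simp only [Matrix.mulVec, dotProduct, outer, Matrix.of_apply, herm]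
        rw [Finset.mul_sum]
        congr 1; funext j; ring
      rw [hmv]
      simp only [dotProduct, Pi.star_apply, Complex.star_def]
      have : ∀ i : Fin n, (starRingEnd ℂ) (v i) * (z i * herm z v) =
          ((starRingEnd ℂ) (v i) * z i) * herm z v := by intro i; ring
      simp only [this, ← Finset.sum_mul]
      have hsum : ∑ i, (starRingEnd ℂ) (v i) * z i = (starRingEnd ℂ) (herm z v) := by
        rw [herm, map_sum]
        congr 1; funext i
        simp [mul_comm]
      rw [hsum, mul_comm, Complex.mul_conj]
    have h2 : ((σ • W).mulVec v) = σ • (W.mulVec v) := Matrix.smul_mulVec σ W v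
    rw [h1, h2, dotProduct_smul, Complex.add_re, Complex.ofReal_re,
      Complex.normSq_eq_norm_sq]
    congr 1
    simp [Complex.smul_re]
  -- optimality applied at z
  have hoz := hopt z hz
  rw [hq z, hq x] at hoz
  have hzz : ‖herm z z‖ = n := by
    rw [herm_self_eq z hz]; simp
  rw [hzz] at hoz
  -- hoz : (n:ℝ)^2 + σ * q z ≤ a^2 + σ * q x
  set qz : ℝ := (dotProduct (star z) (W.mulVec z)).re with hqz
  set qx : ℝ := (dotProduct (star x) (W.mulVec x)).re with hqx
  -- the dot products are `herm`
  have hdp : ∀ v w : Fin n → ℂ, dotProduct (star v) w = herm v w := by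
    intro v w
    simp [dotProduct, herm]
  -- Euclidean space vectors
  set X := (WithLp.equiv 2 (Fin n → ℂ)).symm x with hX
  set Z := (WithLp.equiv 2 (Fin n → ℂ)).symm z with hZ
  have hnX : ‖X‖ = Real.sqrt n := by rw [hX, ← l2norm_eq_norm]; exact l2norm_unit x hx
  have hnZ : ‖Z‖ = Real.sqrt n := by rw [hZ, ← l2norm_eq_norm]; exact l2norm_unit z hz
  have hXZ : (WithLp.equiv 2 (Fin n → ℂ)).symm (x - z) = X - Z := by
    rw [hX, hZ]; exact WithLp.toLp_sub _ _ _
  have hDnorm : D = ‖X - Z‖ := by rw [hD, l2norm_eq_norm, hXZ]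
  -- Cauchy-Schwarz : a ≤ n
  have hCS : a ≤ (n : ℝ) := by
    rw [ha, herm_eq_inner, ← hZ, ← hX]
    calc ‖@inner ℂ _ _ Z X‖ = ‖@inner ℂ _ _ Z X‖ := rfl
      _ ≤ ‖Z‖ * ‖X‖ := norm_inner_le_norm Z X
      _ = (n : ℝ) := by
          rw [hnZ, hnX]
          exact Real.mul_self_sqrt (by positivity)
  have ha0 : 0 ≤ a := norm_nonneg _
  -- D^2 = 2n - 2a
  have hD2 : D ^ 2 = 2 * n - 2 * a := by
    have h1 : (D : ℝ) ^ 2 = Complex.re (@inner ℂ _ _ (X - Z) (X - Z)) := by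
      rw [hDnorm, ← @inner_self_eq_norm_sq ℂ]
      simp [RCLike.re_to_complex]
    have hXX : @inner ℂ _ _ X X = (n : ℂ) := by
      rw [hX, ← herm_eq_inner]; exact herm_self_eq x hx
    have hZZ : @inner ℂ _ _ Z Z = (n : ℂ) := by
      rw [hZ, ← herm_eq_inner]; exact herm_self_eq z hz
    have hZX : @inner ℂ _ _ Z X = (a : ℂ) := by
      rw [hZ, hX, ← herm_eq_inner, hphase, ha]
    have hXZ' : @inner ℂ _ _ X Z = (a : ℂ) := by
      have hc := @inner_conj_symm ℂ _ _ _ _ X Z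
      rw [← hc, hZX]
      exact Complex.conj_ofReal a
    rw [h1, inner_sub_sub_self, hXX, hZZ, hZX, hXZ']
    simp only [Complex.sub_re, Complex.add_re, Complex.ofReal_re, Complex.natCast_re]
    ring
  -- bound on q x - q z
  have hT : ∀ v w : Fin n → ℂ, ‖herm v (W.mulVec w)‖ ≤
      l2norm v * (ρ * l2norm w) := by
    intro v w
    rw [herm_eq_inner]
    calc ‖_‖ = ‖@inner ℂ _ _ ((WithLp.equiv 2 (Fin n → ℂ)).symm v)
          ((WithLp.equiv 2 (Fin n → ℂ)).symm (W.mulVec w))‖ := rfl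
      _ ≤ ‖(WithLp.equiv 2 (Fin n → ℂ)).symm v‖ *
          ‖(WithLp.equiv 2 (Fin n → ℂ)).symm (W.mulVec w)‖ := norm_inner_le_norm _ _
      _ ≤ l2norm v * (ρ * l2norm w) := by
          rw [← l2norm_eq_norm, ← l2norm_eq_norm]
          exact mul_le_mul_of_nonneg_left (l2norm_mulVec_le W w)
            (Real.sqrt_nonneg _)
  have hsplit : herm x (W.mulVec x) - herm z (W.mulVec z) =
      herm x (W.mulVec (x - z)) + herm (x - z) (W.mulVec z) := by
    have e1 : W.mulVec (x - z) = W.mulVec x - W.mulVec z := Matrix.mulVec_sub W x z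
    have e2 : ∀ v w u : Fin n → ℂ, herm v (w - u) = herm v w - herm v u := by
      intro v w u
      simp [herm, mul_sub, Finset.sum_sub_distrib]
    have e3 : ∀ v w u : Fin n → ℂ, herm (v - w) u = herm v u - herm w u := by
      intro v w u
      simp [herm, sub_mul, Finset.sum_sub_distrib, map_sub]
    rw [e1, e2, e3]
    ring
  have hqdiff : qx - qz ≤ 2 * Real.sqrt n * ρ * D := by
    have h1 : qx - qz = (herm x (W.mulVec x)).re - (herm z (W.mulVec z)).re := by
      rw [hqx, hqz, hdp, hdp]
    rw [h1]
    calc (herm x (W.mulVec x)).re - (herm z (W.mulVec z)).re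
        = (herm x (W.mulVec (x - z)) + herm (x - z) (W.mulVec z)).re := by
          rw [← Complex.sub_re, hsplit]
      _ ≤ ‖herm x (W.mulVec (x - z)) + herm (x - z) (W.mulVec z)‖ :=
          Complex.re_le_norm _
      _ ≤ ‖herm x (W.mulVec (x - z))‖ + ‖herm (x - z) (W.mulVec z)‖ :=
          norm_add_le _ _
      _ ≤ l2norm x * (ρ * l2norm (x - z)) + l2norm (x - z) * (ρ * l2norm z) :=
          add_le_add (hT x (x - z)) (hT (x - z) z)
      _ = 2 * Real.sqrt n * ρ * D := by
          rw [l2norm_unit x hx, l2norm_unit z hz, ← hD]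
          ring
  -- put it together : n^2 - a^2 ≤ σ (qx - qz)
  have hoz' : (n : ℝ) ^ 2 + σ * qz ≤ a ^ 2 + σ * qx := by rw [ha]; exact hoz
  have hmain : (n : ℝ) ^ 2 - a ^ 2 ≤ σ * (qx - qz) := by
    have : σ * (qx - qz) = σ * qx - σ * qz := by ring
    linarith [hoz']
  have hchain : (n : ℝ) * D ^ 2 / 2 ≤ 2 * σ * Real.sqrt n * ρ * D := by
    have h1 : (n : ℝ) * ((n : ℝ) - a) ≤ (n : ℝ) ^ 2 - a ^ 2 := by nlinarith [hCS, ha0]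
    have h2 : σ * (qx - qz) ≤ σ * (2 * Real.sqrt n * ρ * D) :=
      mul_le_mul_of_nonneg_left hqdiff hσ
    calc (n : ℝ) * D ^ 2 / 2 = (n : ℝ) * ((n : ℝ) - a) := by rw [hD2]; ring
      _ ≤ (n : ℝ) ^ 2 - a ^ 2 := h1
      _ ≤ σ * (qx - qz) := hmain
      _ ≤ σ * (2 * Real.sqrt n * ρ * D) := h2
      _ = 2 * σ * Real.sqrt n * ρ * D := by ring
  -- conclude
  have hD0 : 0 ≤ D := by rw [hD]; unfold l2norm; exact Real.sqrt_nonneg _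
  rcases eq_or_lt_of_le hD0 with h | h
  · rw [← h]
    positivity
  · rw [le_div_iff₀ hsn]
    have hnsq : Real.sqrt n * Real.sqrt n = (n : ℝ) :=
      Real.mul_self_sqrt (by positivity)
    have h3 : (n : ℝ) * D ≤ 4 * σ * Real.sqrt n * ρ := by
      have h4 : ((n : ℝ) * D) * D ≤ (4 * σ * Real.sqrt n * ρ) * D := by
        have e : ((n : ℝ) * D) * D = 2 * ((n : ℝ) * D ^ 2 / 2) := by ring
        rw [e]
        calc 2 * ((n : ℝ) * D ^ 2 / 2) ≤ 2 * (2 * σ * Real.sqrt n * ρ * D) := by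
              linarith [hchain]
          _ = (4 * σ * Real.sqrt n * ρ) * D := by ring
      exact le_of_mul_le_mul_right h4 h
    have h5 : (D * Real.sqrt n) * Real.sqrt n ≤ (4 * σ * ρ) * Real.sqrt n := by
      calc (D * Real.sqrt n) * Real.sqrt n = (n : ℝ) * D := by
            rw [mul_assoc, hnsq]; ring
        _ ≤ 4 * σ * Real.sqrt n * ρ := h3
        _ = (4 * σ * ρ) * Real.sqrt n := by ring
    exact le_of_mul_le_mul_right h5 hsn

end PhaseSync
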